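/- For every odd prime p, every i ∈ (ZMod p) ∪ {∞} and every j ∈ ZMod p, the subgroup A_{i,j} of the Heisenberg group H_p has order p, its elements are A_{i,j} = {(μ, μ·i, (μ(μ-1)/2)·i + μ·j) : μ ∈ ZMod p} for i ∈ ZMod p and A_{∞,j} = {(0, μ, μ·j) : μ ∈ ZMod p}, and the normalizer of A_{i,j} in H_p equals N_i. -/

import Mathlib

@[ext]
structure Heis (p : ℕ) where
  x : ZMod p
  y : ZMod p
  z : ZMod p

namespace Heis

variable {p : ℕ}

instance : Mul (Heis p) := ⟨fun a b => ⟨a.x + b.x, a.y + b.y, a.z + b.z + a.x * b.y⟩⟩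
instance : One (Heis p) := ⟨⟨0, 0, 0⟩⟩
instance : Inv (Heis p) := ⟨fun a => ⟨-a.x, -a.y, a.x * a.y - a.z⟩⟩

lemma mul_def (a b : Heis p) :
    a * b = ⟨a.x + b.x, a.y + b.y, a.z + b.z + a.x * b.y⟩ := rfl
lemma one_def : (1 : Heis p) = ⟨0, 0, 0⟩ := rfl
lemma inv_def (a : Heis p) : a⁻¹ = ⟨-a.x, -a.y, a.x * a.y - a.z⟩ := rfl

instance instGroup : Group (Heis p) where
  mul_assoc a b c := by ext <;> simp [mul_def] <;> ring
  one_mul a := by ext <;> simp [mul_def, one_def]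
  mul_one a := by ext <;> simp [mul_def, one_def]
  inv_mul_cancel a := by ext <;> simp [mul_def, inv_def, one_def]

end Heis

/-- The subgroups N_i of order p²; `some i` is N_i for i ∈ ZMod p, `none` is N_∞. -/
def N (p : ℕ) : Option (ZMod p) → Subgroup (Heis p)
  | some i =>
    { carrier := {g | g.y = g.x * i}
      one_mem' := by simp [Heis.one_def]
      mul_mem' := by
        intro a b ha hb
        simp only [Set.mem_setOf_eq, Heis.mul_def] at *
        rw [ha, hb]; ring
      inv_mem' := by
        intro a ha
        simp only [Set.mem_setOf_eq, Heis.inv_def] at *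
        rw [ha]; ring }
  | none =>
    { carrier := {g | g.x = 0}
      one_mem' := by simp [Heis.one_def]
      mul_mem' := by
        intro a b ha hb
        simp only [Set.mem_setOf_eq, Heis.mul_def] at *
        rw [ha, hb]; ring
      inv_mem' := by
        intro a ha
        simp only [Set.mem_setOf_eq, Heis.inv_def] at *
        rw [ha]; ring }

/-- The cyclic subgroups A_{i,j} of order p; `A p (some i) j = ⟨(1,i,j)⟩`,
`A p none j = ⟨(0,1,j)⟩`. -/
def A (p : ℕ) : Option (ZMod p) → ZMod p → Subgroup (Heis p)
  | some i, j => Subgroup.zpowers (⟨1, i, j⟩ : Heis p)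
  | none, j => Subgroup.zpowers (⟨0, 1, j⟩ : Heis p)


section Aux

variable {p : ℕ}

lemma Heis.conj_eq (g h : Heis p) :
    g * h * g⁻¹ = ⟨h.x, h.y, h.z + g.x * h.y - g.y * h.x⟩ := by
  ext <;> simp [Heis.mul_def, Heis.inv_def] <;> ring

lemma Heis.zpow_some (h2 : (2 : ZMod p) * (2 : ZMod p)⁻¹ = 1) (i j : ZMod p) (k : ℤ) :
    (⟨1, i, j⟩ : Heis p) ^ k =
      ⟨(k : ZMod p), (k : ZMod p) * i,
        (k : ZMod p) * ((k : ZMod p) - 1) * (2 : ZMod p)⁻¹ * i + (k : ZMod p) * j⟩ := by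
  induction k using Int.induction_on with
  | zero => ext <;> simp [Heis.one_def]
  | succ k ih =>
      rw [zpow_add_one, ih, Heis.mul_def]
      refine Heis.ext ?_ ?_ ?_ <;> push_cast <;> try ring
      linear_combination (-((k : ZMod p) * i)) * h2
  | pred k ih =>
      rw [zpow_sub_one, ih, Heis.inv_def, Heis.mul_def]
      refine Heis.ext ?_ ?_ ?_ <;> push_cast <;> try ring
      linear_combination ((-(k : ZMod p) - 1) * i) * h2

lemma Heis.zpow_none (j : ZMod p) (k : ℤ) :
    (⟨0, 1, j⟩ : Heis p) ^ k = ⟨0, (k : ZMod p), (k : ZMod p) * j⟩ := by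
  induction k using Int.induction_on with
  | zero => ext <;> simp [Heis.one_def]
  | succ k ih =>
      rw [zpow_add_one, ih, Heis.mul_def]
      refine Heis.ext ?_ ?_ ?_ <;> push_cast <;> ring
  | pred k ih =>
      rw [zpow_sub_one, ih, Heis.inv_def, Heis.mul_def]
      refine Heis.ext ?_ ?_ ?_ <;> push_cast <;> ring

end Aux

section Aux2

variable {p : ℕ}

lemma mem_A_some_iff [NeZero p] (h2 : (2 : ZMod p) * (2 : ZMod p)⁻¹ = 1)
    (i j : ZMod p) (g : Heis p) :
    g ∈ A p (some i) j ↔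
      ∃ μ : ZMod p, g = ⟨μ, μ * i, μ * (μ - 1) * (2 : ZMod p)⁻¹ * i + μ * j⟩ := by
  show g ∈ Subgroup.zpowers _ ↔ _
  rw [Subgroup.mem_zpowers_iff]
  constructor
  · rintro ⟨k, rfl⟩
    exact ⟨(k : ZMod p), by rw [Heis.zpow_some h2]⟩
  · rintro ⟨μ, rfl⟩
    refine ⟨(μ.val : ℤ), ?_⟩
    rw [Heis.zpow_some h2]
    push_cast [ZMod.natCast_val, ZMod.cast_id]
    rfl

lemma mem_A_none_iff [NeZero p] (j : ZMod p) (g : Heis p) :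
    g ∈ A p none j ↔ ∃ μ : ZMod p, g = ⟨0, μ, μ * j⟩ := by
  show g ∈ Subgroup.zpowers _ ↔ _
  rw [Subgroup.mem_zpowers_iff]
  constructor
  · rintro ⟨k, rfl⟩
    exact ⟨(k : ZMod p), by rw [Heis.zpow_none]⟩
  · rintro ⟨μ, rfl⟩
    refine ⟨(μ.val : ℤ), ?_⟩
    rw [Heis.zpow_none]
    push_cast [ZMod.natCast_val, ZMod.cast_id]
    rfl

end Aux2
/-- For every odd prime `p`, every `i ∈ ZMod p ∪ {∞}` and every
`j ∈ ZMod p`, the subgroup `A_{i,j}` of `H_p` has order `p`, its elements are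
`{(μ, μi, (μ(μ-1)/2)i + μj) : μ ∈ ZMod p}` (resp. `{(0, μ, μj) : μ ∈ ZMod p}` for
`i = ∞`), and the normalizer of `A_{i,j}` in `H_p` equals `N_i`. -/
theorem heisenberg_A_card_elements_normalizer (p : ℕ) (hp : p.Prime) (ho : Odd p) :
    (∀ i j : ZMod p,
      Nat.card (A p (some i) j) = p ∧
      (A p (some i) j : Set (Heis p)) =
        {g | ∃ μ : ZMod p, g = ⟨μ, μ * i, μ * (μ - 1) * (2 : ZMod p)⁻¹ * i + μ * j⟩} ∧
      Subgroup.normalizer (A p (some i) j : Set (Heis p)) = N p (some i)) ∧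
    ∀ j : ZMod p,
      Nat.card (A p none j) = p ∧
      (A p none j : Set (Heis p)) = {g | ∃ μ : ZMod p, g = ⟨0, μ, μ * j⟩} ∧
      Subgroup.normalizer (A p none j : Set (Heis p)) = N p none := by

  haveI : Fact p.Prime := ⟨hp⟩
  have hp2 : p ≠ 2 := by rintro rfl; simp [Nat.odd_iff] at ho
  have h2 : (2 : ZMod p) * (2 : ZMod p)⁻¹ = 1 := by
    apply mul_inv_cancel₀
    have : ((2 : ℕ) : ZMod p) ≠ 0 := by
      rw [Ne, ZMod.natCast_eq_zero_iff]
      intro hdvd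
      exact hp2 ((Nat.prime_dvd_prime_iff_eq hp Nat.prime_two).mp hdvd)
    simpa using this
  constructor
  · intro i j
    refine ⟨?_, ?_, ?_⟩
    · -- cardinality
      have hpow : (⟨1, i, j⟩ : Heis p) ^ p = 1 := by
        have h := Heis.zpow_some h2 i j (p : ℤ)
        rw [zpow_natCast] at h
        rw [h]
        ext <;> push_cast <;> simp [Heis.one_def]
      have hne : (⟨1, i, j⟩ : Heis p) ≠ 1 := by
        intro h
        have hx := congrArg Heis.x h
        simp [Heis.one_def] at hx
      show Nat.card (Subgroup.zpowers _) = p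
      rw [Nat.card_zpowers]
      rcases (Nat.dvd_prime hp).mp (orderOf_dvd_of_pow_eq_one hpow) with h | h
      · exact absurd (orderOf_eq_one_iff.mp h) hne
      · exact h
    · -- set description
      ext g
      simp only [SetLike.mem_coe, Set.mem_setOf_eq]
      exact mem_A_some_iff h2 i j g
    · -- normalizer
      have hfix : ∀ g h : Heis p, g.y = g.x * i → h.y = h.x * i →
          g * h * g⁻¹ = h := by
        intro g h hg hh
        rw [Heis.conj_eq]
        refine Heis.ext rfl rfl ?_
        show h.z + g.x * h.y - g.y * h.x = h.z
        rw [hh, hg]; ring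
      ext g
      rw [Subgroup.mem_normalizer_iff]
      have hNg : g ∈ N p (some i) ↔ g.y = g.x * i := Iff.rfl
      rw [hNg]
      constructor
      · intro hg
        have ha : (⟨1, i, j⟩ : Heis p) ∈ A p (some i) j := by
          show _ ∈ Subgroup.zpowers _
          exact Subgroup.mem_zpowers _
        obtain ⟨μ, hμ⟩ := (mem_A_some_iff h2 i j _).mp ((hg _).mp ha)
        rw [Heis.conj_eq] at hμ
        simp only [Heis.mk.injEq] at hμ
        obtain ⟨hx, hy, hz⟩ := hμ
        rw [← hx] at hz
        linear_combination -hz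
      · intro hg h
        constructor
        · intro hh
          obtain ⟨μ, rfl⟩ := (mem_A_some_iff h2 i j _).mp hh
          rw [hfix g _ hg rfl]
          exact hh
        · intro hh
          obtain ⟨μ, hμ⟩ := (mem_A_some_iff h2 i j _).mp hh
          rw [Heis.conj_eq] at hμ
          simp only [Heis.mk.injEq] at hμ
          obtain ⟨hx, hy, hz⟩ := hμ
          have hyx : h.y = h.x * i := by rw [hx, hy]
          rwa [hfix g h hg hyx] at hh
  · intro j
    refine ⟨?_, ?_, ?_⟩
    · have hpow : (⟨0, 1, j⟩ : Heis p) ^ p = 1 := by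
        have h := Heis.zpow_none (p := p) j (p : ℤ)
        rw [zpow_natCast] at h
        rw [h]
        ext <;> push_cast <;> simp [Heis.one_def]
      have hne : (⟨0, 1, j⟩ : Heis p) ≠ 1 := by
        intro h
        have hy := congrArg Heis.y h
        simp [Heis.one_def] at hy
      show Nat.card (Subgroup.zpowers _) = p
      rw [Nat.card_zpowers]
      rcases (Nat.dvd_prime hp).mp (orderOf_dvd_of_pow_eq_one hpow) with h | h
      · exact absurd (orderOf_eq_one_iff.mp h) hne
      · exact h
    · ext g
      simp only [SetLike.mem_coe, Set.mem_setOf_eq]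
      exact mem_A_none_iff j g
    · have hfix : ∀ g h : Heis p, g.x = 0 → h.x = 0 → g * h * g⁻¹ = h := by
        intro g h hg hh
        rw [Heis.conj_eq]
        refine Heis.ext rfl rfl ?_
        show h.z + g.x * h.y - g.y * h.x = h.z
        rw [hh, hg]; ring
      ext g
      rw [Subgroup.mem_normalizer_iff]
      have hNg : g ∈ N p none ↔ g.x = 0 := Iff.rfl
      rw [hNg]
      constructor
      · intro hg
        have ha : (⟨0, 1, j⟩ : Heis p) ∈ A p none j := by
          show _ ∈ Subgroup.zpowers _
          exact Subgroup.mem_zpowers _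
        obtain ⟨μ, hμ⟩ := (mem_A_none_iff j _).mp ((hg _).mp ha)
        rw [Heis.conj_eq] at hμ
        simp only [Heis.mk.injEq] at hμ
        obtain ⟨hx, hy, hz⟩ := hμ
        rw [← hy] at hz
        linear_combination hz
      · intro hg h
        constructor
        · intro hh
          obtain ⟨μ, rfl⟩ := (mem_A_none_iff j _).mp hh
          rw [hfix g _ hg rfl]
          exact hh
        · intro hh
          obtain ⟨μ, hμ⟩ := (mem_A_none_iff j _).mp hh
          rw [Heis.conj_eq] at hμ
          simp only [Heis.mk.injEq] at hμ
          obtain ⟨hx, _, _⟩ := hμ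
          have hx0 : h.x = 0 := hx
          rwa [hfix g h hg hx0] at hh
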